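/- For the coefficients α = −(s−b)/(2(s−c)), β = −(s−a)/(2(s−c)), γ = s/(2(s−c)), one has a²βγ + b²αγ + c²αβ = −r_c² − r_c R, where r_c = F/(s−c), R satisfies r_c R = abc/(4(s−c)), and F² = s(s−a)(s−b)(s−c). -/

import Mathlib

theorem excircle_coefficient_identity
    (a b c s F rc R : ℝ)
    (ha0 : 0 < a) (hb0 : 0 < b) (hc0 : 0 < c)
    (hab : a < b + c) (hbc : b < a + c) (hca : c < a + b)
    (hs : s = (a + b + c) / 2)
    (hF : F = Real.sqrt (s * (s - a) * (s - b) * (s - c)))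
    (hrc : rc = F / (s - c))
    (hrcR : rc * R = a * b * c / (4 * (s - c))) :
    a ^ 2 * (-(s - a) / (2 * (s - c))) * (s / (2 * (s - c))) +
      b ^ 2 * (-(s - b) / (2 * (s - c))) * (s / (2 * (s - c))) +
      c ^ 2 * (-(s - b) / (2 * (s - c))) * (-(s - a) / (2 * (s - c))) =
      -rc ^ 2 - rc * R := by
  have hsc : 0 < s - c := by rw [hs]; linarith
  have hsa : 0 < s - a := by rw [hs]; linarith
  have hsb : 0 < s - b := by rw [hs]; linarith
  have hs0 : 0 < s := by rw [hs]; linarith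
  have hne : (s - c) ≠ 0 := ne_of_gt hsc
  have hF2 : F ^ 2 = s * (s - a) * (s - b) * (s - c) := by
    rw [hF, sq, Real.mul_self_sqrt (by positivity)]
  have hrc2 : rc ^ 2 = s * (s - a) * (s - b) / (s - c) := by
    rw [hrc, div_pow, hF2]
    field_simp
  have key : -(a ^ 2 * (s - a) * s) - b ^ 2 * (s - b) * s + c ^ 2 * (s - b) * (s - a)
      = -(4 * s * (s - a) * (s - b) * (s - c)) - a * b * c * (s - c) := by
    linear_combination (2 * (2 * s ^ 3 - c * s ^ 2 - b * s ^ 2 - a * s ^ 2 - a ^ 2 * s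
      - b ^ 2 * s + b * c * s + a * c * s + a * b * s)) * hs
  calc
    a ^ 2 * (-(s - a) / (2 * (s - c))) * (s / (2 * (s - c))) +
        b ^ 2 * (-(s - b) / (2 * (s - c))) * (s / (2 * (s - c))) +
        c ^ 2 * (-(s - b) / (2 * (s - c))) * (-(s - a) / (2 * (s - c)))
      = (-(a ^ 2 * (s - a) * s) - b ^ 2 * (s - b) * s + c ^ 2 * (s - b) * (s - a))
          / (4 * (s - c) ^ 2) := by field_simp; ring
    _ = (-(4 * s * (s - a) * (s - b) * (s - c)) - a * b * c * (s - c)) / (4 * (s - c) ^ 2) := by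
          rw [key]
    _ = -rc ^ 2 - rc * R := by rw [hrc2, hrcR]; field_simp
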